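/- Fix integers p ≥ 1 and κ ≥ p + 4, and let l₁, l₂ ≥ max{p + 2, ⌈(κ+1)/2⌉}. If Q₁ ∈ Δ^γ_{0,l₁} and Q₂ ∈ Δ^γ_{0,l₂} are two distinct cubes having the same label i ∈ {1,…,2^κ}ⁿ, then d(Q₁ + 𝓒_{2^p}, Q₂ + 𝓒_{2^p}) > 0, where d denotes the Euclidean distance between sets. -/

import Mathlib

open MeasureTheory Metric Set

noncomputable section

/-- Euclidean space ℝⁿ. -/
abbrev E (n : ℕ) := EuclideanSpace ℝ (Fin n)

/-- m(x) = min {1, 1/|x|} (with value 1 at x = 0). -/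
def mFun {n : ℕ} (x : E n) : ℝ := if ‖x‖ ≤ 1 then 1 else ‖x‖⁻¹

/-- The dyadic cube `2^{-m}(v + [0,1)ⁿ)` of `Δ_m`. -/
def dyadicCube (n : ℕ) (m : ℤ) (v : Fin n → ℤ) : Set (E n) :=
  {y | ∀ i, y i ∈ Set.Ico ((2 : ℝ) ^ (-m) * v i) ((2 : ℝ) ^ (-m) * (v i + 1))}

/-- The layers `L_0 = [-1,1)ⁿ` and `L_l = [-2^l,2^l)ⁿ \ [-2^{l-1},2^{l-1})ⁿ` for `l ≥ 1`. -/
def layer (n : ℕ) (l : ℕ) : Set (E n) :=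
  if l = 0 then {y | ∀ i, y i ∈ Set.Ico (-1 : ℝ) 1}
  else {y | ∀ i, y i ∈ Set.Ico (-(2 : ℝ) ^ l) ((2 : ℝ) ^ l)} \
       {y | ∀ i, y i ∈ Set.Ico (-(2 : ℝ) ^ (l - 1)) ((2 : ℝ) ^ (l - 1))}

/-- `A + 𝓒_α`: the set of centres of balls in `𝓑_α` that intersect `A`. -/
def plusC (n : ℕ) (α : ℝ) (A : Set (E n)) : Set (E n) :=
  {z | ∃ r : ℝ, 0 ≤ r ∧ r ≤ α * mFun z ∧ (ball z r ∩ A).Nonempty}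

-- coordinate lemmas for Euclidean space
lemma abs_coord_le_dist {n : ℕ} (x y : E n) (i : Fin n) : |x i - y i| ≤ dist x y := by
  rw [EuclideanSpace.dist_eq]
  have h : |x i - y i| = Real.sqrt (dist (x i) (y i) ^ 2) := by
    rw [Real.sqrt_sq_eq_abs, Real.dist_eq, abs_abs]
  rw [h]
  apply Real.sqrt_le_sqrt
  exact Finset.single_le_sum (f := fun j => dist (x j) (y j) ^ 2)
    (fun j _ => sq_nonneg _) (Finset.mem_univ i)

lemma abs_coord_le_norm {n : ℕ} (x : E n) (i : Fin n) : |x i| ≤ ‖x‖ := by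
  have := abs_coord_le_dist x 0 i
  simpa using this

-- layer lemmas
lemma layer_big_coord {n : ℕ} {l : ℕ} (hl : 1 ≤ l) {y : E n} (hy : y ∈ layer n l) :
    ∃ i, (2:ℝ) ^ (l - 1) ≤ |y i| := by
  rw [layer, if_neg (by omega)] at hy
  obtain ⟨-, h2⟩ := hy
  simp only [mem_setOf_eq, not_forall] at h2
  obtain ⟨i, hi⟩ := h2
  rw [Set.mem_Ico, not_and_or, not_le, not_lt] at hi
  have hpos : (0:ℝ) < 2 ^ (l-1) := by positivity
  refine ⟨i, ?_⟩
  rcases hi with h | h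
  · rw [abs_of_neg (by linarith)]; linarith
  · exact h.trans (le_abs_self _)

lemma layer_norm {n : ℕ} {l : ℕ} (hl : 1 ≤ l) {y : E n} (hy : y ∈ layer n l) :
    (2:ℝ) ^ (l - 1) ≤ ‖y‖ := by
  obtain ⟨i, hi⟩ := layer_big_coord hl hy
  exact hi.trans (abs_coord_le_norm y i)

lemma layer_coord {n : ℕ} {l : ℕ} {y : E n} (hy : y ∈ layer n l) (i : Fin n) :
    -(2:ℝ)^l ≤ y i ∧ y i < 2^l := by
  rw [layer] at hy
  split_ifs at hy with h
  · subst h; have := hy i; rw [Set.mem_Ico] at this; norm_num at this ⊢; exact this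
  · have := hy.1 i; rw [Set.mem_Ico] at this; exact this

-- cube lemmas
lemma cube_coord {n l : ℕ} {v : Fin n → ℤ} {y : E n}
    (hy : y ∈ dyadicCube n l v) (i : Fin n) :
    ((2:ℝ)^l)⁻¹ * v i ≤ y i ∧ y i < ((2:ℝ)^l)⁻¹ * ((v i : ℝ) + 1) := by
  have hA : (2:ℝ)^(-(l:ℤ)) = ((2:ℝ)^l)⁻¹ := by rw [zpow_neg, zpow_natCast]
  have := hy i; rw [Set.mem_Ico, hA] at this; exact this

lemma corner_mem {n l : ℕ} (v : Fin n → ℤ) :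
    (WithLp.toLp 2 (fun i => (2:ℝ)^(-(l:ℤ)) * v i) : E n) ∈ dyadicCube n l v := by
  intro i
  rw [Set.mem_Ico]
  have hpos : (0:ℝ) < 2^(-(l:ℤ)) := by positivity
  constructor
  · exact le_refl _
  · exact mul_lt_mul_of_pos_left (by push_cast; linarith) hpos

lemma corner_coord {n l : ℕ} (v : Fin n → ℤ) (i : Fin n) :
    (WithLp.toLp 2 (fun i => (2:ℝ)^(-(l:ℤ)) * v i) : E n) i = ((2:ℝ)^l)⁻¹ * v i := by
  have hA : (2:ℝ)^(-(l:ℤ)) = ((2:ℝ)^l)⁻¹ := by rw [zpow_neg, zpow_natCast]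
  rw [hA]

lemma v_bounds {n l : ℕ} {v : Fin n → ℤ} (hQ : dyadicCube n l v ⊆ layer n l) (i : Fin n) :
    -(2^(2*l) : ℤ) ≤ v i ∧ v i ≤ 2^(2*l) - 1 := by
  have hc := corner_mem (l := l) v
  have hl := layer_coord (hQ hc) i
  rw [corner_coord] at hl
  have hpos : (0:ℝ) < 2^l := by positivity
  have h2l : (2:ℝ)^l * (2:ℝ)^l = 2^(2*l) := by rw [← pow_add]; congr 1; omega
  constructor
  · have := (le_inv_mul_iff₀ hpos).mp hl.1
    have hr : -((2:ℝ)^(2*l)) ≤ (v i : ℝ) := by nlinarith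
    have : ((-(2^(2*l)) : ℤ) : ℝ) ≤ (v i : ℝ) := by push_cast; exact hr
    exact_mod_cast this
  · have := (inv_mul_lt_iff₀ hpos).mp hl.2
    have hr : (v i : ℝ) < (2:ℝ)^(2*l) := by nlinarith
    have : (v i : ℝ) < ((2^(2*l) : ℤ) : ℝ) := by push_cast; exact hr
    have hz : v i < (2^(2*l) : ℤ) := by exact_mod_cast this
    omega

lemma plusC_close {n p l : ℕ} (hp : 1 ≤ p) (hl : p + 2 ≤ l) {v : Fin n → ℤ}
    (hQ : dyadicCube n l v ⊆ layer n l) {z : E n}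
    (hz : z ∈ plusC n (2 ^ p) (dyadicCube n l v)) :
    ∃ y ∈ dyadicCube n l v, dist z y ≤ (2:ℝ) ^ (p + 2) * ((2:ℝ) ^ l)⁻¹ := by
  obtain ⟨r, hr0, hrm, y, hyb, hyQ⟩ := hz
  refine ⟨y, hyQ, le_of_lt ?_⟩
  have hp2 : (0:ℝ) < 2 ^ p := by positivity
  have hm1 : mFun z ≤ 1 := by
    rw [mFun]; split
    · exact le_refl 1
    · next h => exact inv_le_one_of_one_le₀ (le_of_not_ge h)
  have hrp : r ≤ 2 ^ p := le_trans hrm (by nlinarith)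
  have hdzy : dist z y < r := by rw [dist_comm]; exact mem_ball.mp hyb
  have hny : (2:ℝ) ^ (l - 1) ≤ ‖y‖ := layer_norm (by omega) (hQ hyQ)
  have h1 : (2:ℝ) ^ (l-1) = 2 * 2 ^ (l-2) := by
    rw [show l-1 = (l-2)+1 from by omega, pow_succ]; ring
  have h2 : (2:ℝ) ^ p ≤ 2 ^ (l-2) := pow_le_pow_right₀ (by norm_num) (by omega)
  have hzl : (2:ℝ) ^ (l-2) ≤ ‖z‖ := by
    have := norm_sub_norm_le y z
    have hd : ‖y - z‖ = dist y z := (dist_eq_norm y z).symm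
    rw [hd] at this
    have : ‖y‖ - r ≤ ‖z‖ := by linarith [mem_ball.mp hyb]
    linarith
  have hz1 : (1:ℝ) < ‖z‖ := by
    have : (2:ℝ) ≤ 2 ^ (l-2) := by
      calc (2:ℝ) = 2^1 := (pow_one 2).symm
      _ ≤ 2 ^ (l-2) := pow_le_pow_right₀ (by norm_num) (by omega)
    linarith
  have hmz : mFun z = ‖z‖⁻¹ := by rw [mFun, if_neg (by linarith)]
  have hinv : ‖z‖⁻¹ ≤ ((2:ℝ)^(l-2))⁻¹ := inv_anti₀ (by positivity) hzl
  have he : ((2:ℝ)^(l-2))⁻¹ * 2^p = (2:ℝ) ^ (p+2) * ((2:ℝ)^l)⁻¹ := by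
    rw [inv_mul_eq_div, ← div_eq_mul_inv, div_eq_div_iff (by positivity) (by positivity),
      ← pow_add, ← pow_add]
    congr 1; omega
  calc dist z y < r := hdzy
    _ ≤ 2^p * mFun z := hrm
    _ = mFun z * 2^p := mul_comm _ _
    _ ≤ ((2:ℝ)^(l-2))⁻¹ * 2^p := by rw [hmz]; exact mul_le_mul_of_nonneg_right hinv (le_of_lt hp2)
    _ = _ := he

lemma dist_lower {n : ℕ} {z₁ z₂ y₁ y₂ : E n} {j : Fin n} {c ρ₁ ρ₂ : ℝ}
    (h1 : dist z₁ y₁ ≤ ρ₁) (h2 : dist z₂ y₂ ≤ ρ₂) (hc : c ≤ |y₁ j - y₂ j|) :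
    c - ρ₁ - ρ₂ ≤ dist z₁ z₂ := by
  have h4 := dist_triangle4 y₁ z₁ z₂ y₂
  have h5 := abs_coord_le_dist y₁ y₂ j
  have e1 : dist y₁ z₁ = dist z₁ y₁ := dist_comm _ _
  linarith

lemma rho_le_one {p l : ℕ} (hl : p + 2 ≤ l) :
    (2:ℝ) ^ (p + 2) * ((2:ℝ) ^ l)⁻¹ ≤ 1 := by
  rw [← div_eq_mul_inv, div_le_one (by positivity)]
  exact pow_le_pow_right₀ (by norm_num) hl

set_option maxHeartbeats 1000000 in
lemma key (n : ℕ) (p κ : ℕ) (hp : 1 ≤ p) (hκ : p + 4 ≤ κ)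
    (l₁ l₂ : ℕ) (hl₁ : max (p + 2) ((κ + 2) / 2) ≤ l₁) (hl₂ : max (p + 2) ((κ + 2) / 2) ≤ l₂)
    (hll : l₁ ≤ l₂)
    (v₁ v₂ : Fin n → ℤ)
    (hQ₁ : dyadicCube n l₁ v₁ ⊆ layer n l₁)
    (hQ₂ : dyadicCube n l₂ v₂ ⊆ layer n l₂)
    (hne : dyadicCube n l₁ v₁ ≠ dyadicCube n l₂ v₂)
    (hlabel : ∀ j, v₁ j % (2 ^ κ : ℤ) = v₂ j % (2 ^ κ : ℤ)) :
    ∃ δ : ℝ, 0 < δ ∧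
      ∀ z₁ ∈ plusC n (2 ^ p) (dyadicCube n l₁ v₁),
        ∀ z₂ ∈ plusC n (2 ^ p) (dyadicCube n l₂ v₂), δ ≤ dist z₁ z₂ := by
  have hp₁ : p + 2 ≤ l₁ := le_trans (le_max_left _ _) hl₁
  have hp₂ : p + 2 ≤ l₂ := le_trans (le_max_left _ _) hl₂
  have hκ₁ : κ + 1 ≤ 2 * l₁ := by
    have := le_trans (le_max_right _ _) hl₁; omega
  set A₁ : ℝ := ((2:ℝ)^l₁)⁻¹ with hA₁def
  set A₂ : ℝ := ((2:ℝ)^l₂)⁻¹ with hA₂def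
  have hA₁0 : (0:ℝ) < A₁ := by rw [hA₁def]; positivity
  have hA₂0 : (0:ℝ) < A₂ := by rw [hA₂def]; positivity
  have hκR : (2:ℝ)^(p+4) ≤ 2^κ := pow_le_pow_right₀ (by norm_num) hκ
  have hp2R : (8:ℝ) ≤ 2^(p+2) := by
    calc (8:ℝ) = 2^3 := by norm_num
      _ ≤ 2^(p+2) := pow_le_pow_right₀ (by norm_num) (by omega)
  rcases eq_or_lt_of_le hll with heq | hlt
  · -- Case A : same scale
    subst heq
    have hvne : ∃ j, v₁ j ≠ v₂ j := by
      by_contra h; push_neg at h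
      exact hne (congrArg (dyadicCube n l₁) (funext h))
    obtain ⟨j, hj⟩ := hvne
    obtain ⟨k, hk⟩ := (Int.ModEq.dvd (hlabel j) : (2^κ:ℤ) ∣ v₂ j - v₁ j)
    have hk0 : k ≠ 0 := by rintro rfl; rw [mul_zero] at hk; exact hj (by omega)
    have habs : (2:ℤ)^κ ≤ |v₂ j - v₁ j| := by
      rw [hk, abs_mul, abs_of_nonneg (by positivity : (0:ℤ) ≤ (2:ℤ)^κ)]
      nlinarith [Int.one_le_abs hk0, pow_pos (by norm_num : (0:ℤ) < 2) κ]
    refine ⟨A₁ * ((2:ℝ)^κ - 1) - 2^(p+2)*A₁ - 2^(p+2)*A₁, ?_, ?_⟩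
    · have h4 : (2:ℝ)^(p+4) = 4 * 2^(p+2) := by rw [pow_succ, pow_succ]; ring
      have h1 : (1:ℝ) ≤ 2^(p+2) := one_le_pow₀ (by norm_num)
      have hcc : (0:ℝ) < (2:ℝ)^κ - 1 - 2^(p+2) - 2^(p+2) := by linarith
      have := mul_pos hA₁0 hcc
      linarith
    · intro z₁ hz₁ z₂ hz₂
      obtain ⟨y₁, hy₁Q, hd₁⟩ := plusC_close hp hp₁ hQ₁ hz₁
      obtain ⟨y₂, hy₂Q, hd₂⟩ := plusC_close hp hp₁ hQ₂ hz₂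
      have hc₁ := cube_coord hy₁Q j
      have hc₂ := cube_coord hy₂Q j
      have hcb : A₁ * ((2:ℝ)^κ - 1) ≤ |y₁ j - y₂ j| := by
        rcases le_or_gt 0 (v₂ j - v₁ j) with hs | hs
        · have h2 : (2^κ:ℤ) ≤ v₂ j - v₁ j := by rwa [abs_of_nonneg hs] at habs
          have hR : (2:ℝ)^κ ≤ (v₂ j : ℝ) - v₁ j := by exact_mod_cast h2
          have hmain : A₁ * ((2:ℝ)^κ - 1) ≤ y₂ j - y₁ j := by
            linarith [hc₂.1, hc₁.2, mul_le_mul_of_nonneg_left hR hA₁0.le]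
          calc A₁ * ((2:ℝ)^κ - 1) ≤ y₂ j - y₁ j := hmain
            _ ≤ |y₁ j - y₂ j| := by rw [abs_sub_comm]; exact le_abs_self _
        · have h2 : (2^κ:ℤ) ≤ v₁ j - v₂ j := by rw [abs_of_neg hs] at habs; omega
          have hR : (2:ℝ)^κ ≤ (v₁ j : ℝ) - v₂ j := by exact_mod_cast h2
          have hmain : A₁ * ((2:ℝ)^κ - 1) ≤ y₁ j - y₂ j := by
            linarith [hc₁.1, hc₂.2, mul_le_mul_of_nonneg_left hR hA₁0.le]
          exact hmain.trans (le_abs_self _)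
      exact dist_lower hd₁ hd₂ hcb
  · rcases (by omega : l₂ = l₁ + 1 ∨ l₁ + 2 ≤ l₂) with hB | hC
    · -- Case B : adjacent layers
      subst hB
      -- locate the outer coordinate of Q₂
      have hc₂m := corner_mem (l := l₁+1) v₂
      have hlay := hQ₂ hc₂m
      rw [layer, if_neg (by omega)] at hlay
      obtain ⟨-, h2⟩ := hlay
      simp only [mem_setOf_eq, not_forall] at h2
      obtain ⟨j₀, hj₀⟩ := h2
      have hj₀' : ((2:ℝ)^(l₁+1))⁻¹ * v₂ j₀ ∉ Set.Ico (-(2:ℝ)^(l₁+1-1)) ((2:ℝ)^(l₁+1-1)) := by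
        rw [← corner_coord (l := l₁+1) v₂ j₀]; exact hj₀
      rw [show l₁ + 1 - 1 = l₁ from rfl, Set.mem_Ico, not_and_or, not_le, not_lt] at hj₀'
      have hpowR : (2:ℝ)^(l₁+1) * (2:ℝ)^l₁ = 2^(2*l₁+1) := by rw [← pow_add]; congr 1; omega
      have hposl2 : (0:ℝ) < 2^(l₁+1) := by positivity
      -- integer bounds
      have hv₂ : (v₂ j₀ ≤ -(2^(2*l₁+1)) - 1) ∨ ((2^(2*l₁+1):ℤ) ≤ v₂ j₀) := by
        rcases hj₀' with h | h
        · left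
          have h' := (inv_mul_lt_iff₀ hposl2).mp h
          have hr : (v₂ j₀ : ℝ) < -((2:ℝ)^(2*l₁+1)) := by linarith [h', hpowR]
          have : (v₂ j₀ : ℝ) < ((-(2^(2*l₁+1)) : ℤ) : ℝ) := by push_cast; linarith
          have h'' : v₂ j₀ < -(2^(2*l₁+1) : ℤ) := by exact_mod_cast this
          omega
        · right
          have h' := (le_inv_mul_iff₀ hposl2).mp h
          have hr : ((2:ℝ))^(2*l₁+1) ≤ (v₂ j₀:ℝ) := by linarith [h', hpowR]
          exact_mod_cast hr
      have hv₁ := v_bounds hQ₁ j₀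
      have hdvd : (2^κ:ℤ) ∣ v₂ j₀ - v₁ j₀ := Int.ModEq.dvd (hlabel j₀)
      have hdvd' : (2^κ:ℤ) ∣ v₁ j₀ - v₂ j₀ := by
        have h := (dvd_neg (α := ℤ)).mpr hdvd; rwa [neg_sub] at h
      have hdvd2 : (2^κ:ℤ) ∣ 2^(2*l₁) := pow_dvd_pow 2 (by omega)
      have hKpos : (0:ℤ) < 2^κ := by positivity
      have hpow2 : (2:ℤ)^(2*l₁+1) = 2 * 2^(2*l₁) := by rw [pow_succ]; ring
      have ht : ((2^κ:ℤ) ≤ 2*v₁ j₀ - v₂ j₀) ∨ (2*v₁ j₀ - v₂ j₀ ≤ -(2^κ)) := by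
        rcases hv₂ with h | h
        · left
          have hY : (2^κ:ℤ) ∣ (v₁ j₀ - v₂ j₀ - 2^(2*l₁)) := dvd_sub hdvd' hdvd2
          have hYpos : 1 ≤ v₁ j₀ - v₂ j₀ - 2^(2*l₁) := by
            rw [hpow2] at h; linarith [hv₁.1]
          have hKY : (2^κ:ℤ) ≤ v₁ j₀ - v₂ j₀ - 2^(2*l₁) := Int.le_of_dvd (by linarith) hY
          linarith [hv₁.1]
        · right
          have hX : (2^κ:ℤ) ∣ (v₁ j₀ - v₂ j₀ + 2^(2*l₁)) := dvd_add hdvd' hdvd2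
          have hXneg : v₁ j₀ - v₂ j₀ + 2^(2*l₁) ≤ -1 := by
            rw [hpow2] at h; linarith [hv₁.2]
          have hKX : (2^κ:ℤ) ≤ -(v₁ j₀ - v₂ j₀ + 2^(2*l₁)) :=
            Int.le_of_dvd (by linarith) (dvd_neg.mpr hX)
          linarith [hv₁.2]
      -- relation between the scales
      have hA12 : A₁ = 2 * A₂ := by
        rw [hA₁def, hA₂def, pow_succ, mul_inv]
        ring
      refine ⟨A₂ * ((2:ℝ)^κ - 2) - 2^(p+2)*(2*A₂) - 2^(p+2)*A₂, ?_, ?_⟩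
      · have h4 : (2:ℝ)^(p+4) = 4 * 2^(p+2) := by rw [pow_succ, pow_succ]; ring
        have hcc : (0:ℝ) < (2:ℝ)^κ - 2 - 2^(p+2)*2 - 2^(p+2) := by linarith
        have := mul_pos hA₂0 hcc
        linarith
      · intro z₁ hz₁ z₂ hz₂
        obtain ⟨y₁, hy₁Q, hd₁⟩ := plusC_close hp hp₁ hQ₁ hz₁
        obtain ⟨y₂, hy₂Q, hd₂⟩ := plusC_close hp hp₂ hQ₂ hz₂
        rw [← hA₁def, hA12] at hd₁
        rw [← hA₂def] at hd₂
        have hc₁ := cube_coord hy₁Q j₀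
        have hc₂ := cube_coord hy₂Q j₀
        have hc₁l : 2 * A₂ * (v₁ j₀ : ℝ) ≤ y₁ j₀ := by rw [← hA12]; exact hc₁.1
        have hc₁r : y₁ j₀ < 2 * A₂ * ((v₁ j₀ : ℝ) + 1) := by rw [← hA12]; exact hc₁.2
        have hcb : A₂ * ((2:ℝ)^κ - 2) ≤ |y₁ j₀ - y₂ j₀| := by
          rcases ht with h | h
          · have hR : (2:ℝ)^κ ≤ 2*(v₁ j₀:ℝ) - v₂ j₀ := by exact_mod_cast h
            have hmain : A₂ * ((2:ℝ)^κ - 2) ≤ y₁ j₀ - y₂ j₀ := by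
              linarith [hc₁l, hc₂.2, mul_le_mul_of_nonneg_left hR hA₂0.le]
            exact hmain.trans (le_abs_self _)
          · have hR : 2*(v₁ j₀:ℝ) - v₂ j₀ ≤ -((2:ℝ)^κ) := by exact_mod_cast h
            have hmain : A₂ * ((2:ℝ)^κ - 2) ≤ y₂ j₀ - y₁ j₀ := by
              linarith [hc₂.1, hc₁r, mul_le_mul_of_nonneg_left hR hA₂0.le]
            calc A₂ * ((2:ℝ)^κ - 2) ≤ y₂ j₀ - y₁ j₀ := hmain
              _ ≤ |y₁ j₀ - y₂ j₀| := by rw [abs_sub_comm]; exact le_abs_self _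
        exact dist_lower hd₁ hd₂ hcb
    · -- Case C : far layers
      refine ⟨1, one_pos, ?_⟩
      intro z₁ hz₁ z₂ hz₂
      obtain ⟨y₁, hy₁Q, hd₁⟩ := plusC_close hp hp₁ hQ₁ hz₁
      obtain ⟨y₂, hy₂Q, hd₂⟩ := plusC_close hp hp₂ hQ₂ hz₂
      obtain ⟨j, hj⟩ := layer_big_coord (by omega) (hQ₂ hy₂Q)
      have hy₁L := layer_coord (hQ₁ hy₁Q) j
      have hab : |y₁ j| ≤ (2:ℝ)^l₁ := abs_le.mpr ⟨hy₁L.1, le_of_lt hy₁L.2⟩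
      have h21 : (2:ℝ)^l₁ ≤ 2^(l₂-2) := pow_le_pow_right₀ (by norm_num) (by omega)
      have h22 : (2:ℝ)^(l₂-1) = 2 * 2^(l₂-2) := by
        rw [show l₂-1 = (l₂-2)+1 from by omega, pow_succ]; ring
      have hcb : (2:ℝ)^(l₂-2) ≤ |y₁ j - y₂ j| := by
        have habs2 := abs_sub_abs_le_abs_sub (y₂ j) (y₁ j)
        rw [abs_sub_comm] at habs2
        linarith
      have hρ₁ : (2:ℝ)^(p+2) * A₁ ≤ 1 := rho_le_one hp₁
      have hρ₂ : (2:ℝ)^(p+2) * A₂ ≤ 1 := rho_le_one hp₂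
      have hfin := dist_lower hd₁ hd₂ hcb
      have h8 : (8:ℝ) ≤ 2^(l₂-2) := by
        calc (8:ℝ) = 2^3 := by norm_num
          _ ≤ _ := pow_le_pow_right₀ (by norm_num) (by omega)
      linarith

/-- Let `p ≥ 1`, `κ ≥ p + 4`, and `l₁, l₂ ≥ max (p+2) ⌈(κ+1)/2⌉`.  If
`Q₁ = 2^{-l₁}(v₁ + [0,1)ⁿ) ∈ Δ^γ_{0,l₁}` and `Q₂ = 2^{-l₂}(v₂ + [0,1)ⁿ) ∈ Δ^γ_{0,l₂}` are
distinct cubes with the same label (the label of `2^{-l}(v+[0,1)ⁿ)` being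
`(v j mod 2^κ) + 1`), then `d(Q₁ + 𝓒_{2^p}, Q₂ + 𝓒_{2^p}) > 0`. -/
theorem stmt5 (n : ℕ) (hn : 1 ≤ n) (p κ : ℕ) (hp : 1 ≤ p) (hκ : p + 4 ≤ κ)
    (l₁ l₂ : ℕ) (hl₁ : max (p + 2) ((κ + 2) / 2) ≤ l₁) (hl₂ : max (p + 2) ((κ + 2) / 2) ≤ l₂)
    (v₁ v₂ : Fin n → ℤ)
    (hQ₁ : dyadicCube n l₁ v₁ ⊆ layer n l₁)
    (hQ₂ : dyadicCube n l₂ v₂ ⊆ layer n l₂)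
    (hne : dyadicCube n l₁ v₁ ≠ dyadicCube n l₂ v₂)
    (hlabel : ∀ j, v₁ j % (2 ^ κ : ℤ) = v₂ j % (2 ^ κ : ℤ)) :
    ∃ δ : ℝ, 0 < δ ∧
      ∀ z₁ ∈ plusC n (2 ^ p) (dyadicCube n l₁ v₁),
        ∀ z₂ ∈ plusC n (2 ^ p) (dyadicCube n l₂ v₂), δ ≤ dist z₁ z₂ := by
  rcases le_total l₁ l₂ with hll | hll
  · exact key n p κ hp hκ l₁ l₂ hl₁ hl₂ hll v₁ v₂ hQ₁ hQ₂ hne hlabel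
  · obtain ⟨δ, hδ, h⟩ := key n p κ hp hκ l₂ l₁ hl₂ hl₁ hll v₂ v₁ hQ₂ hQ₁ hne.symm
      (fun j => (hlabel j).symm)
    exact ⟨δ, hδ, fun z₁ hz₁ z₂ hz₂ => by rw [dist_comm]; exact h z₂ hz₂ z₁ hz₁⟩
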